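/- Let $(R,\mathfrak{m})$ be a two-dimensional regular local ring with regular system of parameters $x, y$, let $2 \leq m \leq n$ be integers, and set $I = (x^m) + y^{n-m+1}\mathfrak{m}^{m-1}$ and $Q = (x^m, y^n)$. Then $Q \subseteq I$, $I^2 = QI$, $\mu_R(I) = m+1$, and $\mathrm{o}(I) = m$; in particular $I$ is a contracted stable ideal. -/

import Mathlib

open Ideal IsLocalRing Submodule
open Ideal IsLocalRing Submodule Pointwise
set_option linter.unusedSectionVars false
set_option maxHeartbeats 1000000
set_option linter.unusedSectionVars false

section Helpers

variable {R : Type*} [CommRing R] [IsDomain R] [IsNoetherianRing R] [IsLocalRing R]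
variable {x y : R}

lemma hxM (hm : maximalIdeal R = Ideal.span {x, y}) : x ∈ maximalIdeal R := by
  rw [hm]; exact Ideal.subset_span (by simp)

lemma hyM (hm : maximalIdeal R = Ideal.span {x, y}) : y ∈ maximalIdeal R := by
  rw [hm]; exact Ideal.subset_span (by simp)

lemma mono_mem (hm : maximalIdeal R = Ideal.span {x, y}) {i j k : ℕ} (h : i + j = k) :
    x ^ i * y ^ j ∈ maximalIdeal R ^ k := by
  subst h
  rw [pow_add]
  exact Ideal.mul_mem_mul (Ideal.pow_mem_pow (hxM hm) i) (Ideal.pow_mem_pow (hyM hm) j)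

lemma pow_le_span (hm : maximalIdeal R = Ideal.span {x, y}) (k : ℕ) :
    maximalIdeal R ^ k ≤ Ideal.span ((fun i => x ^ i * y ^ (k - i)) '' Set.Iic k) := by
  induction k with
  | zero =>
      intro a _
      have h1 : (1 : R) ∈ Ideal.span ((fun i => x ^ i * y ^ (0 - i)) '' Set.Iic 0) := by
        apply Ideal.subset_span
        exact ⟨0, by simp, by simp⟩
      simpa using Ideal.mul_mem_left _ a h1
  | succ k ih =>
      have h1 : maximalIdeal R ^ (k + 1) = Ideal.span {x, y} * maximalIdeal R ^ k := by
        rw [← hm, pow_succ, mul_comm]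
      rw [h1]
      calc Ideal.span {x, y} * maximalIdeal R ^ k
          ≤ Ideal.span {x, y} * Ideal.span ((fun i => x ^ i * y ^ (k - i)) '' Set.Iic k) :=
            Ideal.mul_mono_right ih
        _ ≤ Ideal.span ((fun i => x ^ i * y ^ (k + 1 - i)) '' Set.Iic (k + 1)) := by
            rw [Ideal.span_mul_span]
            apply Ideal.span_mono
            intro z hz
            simp only [Set.mem_mul, Set.mem_iUnion, Set.mem_singleton_iff, Set.mem_insert_iff,
              Set.mem_image, Set.mem_Iic, exists_prop] at hz
            obtain ⟨s, hs, t, ⟨⟨i, hi, rfl⟩, rfl⟩⟩ := hz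
            rcases hs with h | h <;> rw [h]
            · refine ⟨i + 1, by simpa using hi, ?_⟩
              show x ^ (i + 1) * y ^ (k + 1 - (i + 1)) = x * (x ^ i * y ^ (k - i))
              have h2 : k + 1 - (i + 1) = k - i := by omega
              rw [h2, pow_succ]
              ring
            · refine ⟨i, by simp; omega, ?_⟩
              show x ^ i * y ^ (k + 1 - i) = y * (x ^ i * y ^ (k - i))
              have h2 : k + 1 - i = (k - i) + 1 := by omega
              rw [h2, pow_succ]
              ring

lemma pow_succ_le (hm : maximalIdeal R = Ideal.span {x, y}) (k : ℕ) :
    maximalIdeal R ^ (k + 1) ≤ Ideal.span {x ^ (k + 1)} ⊔ Ideal.span {y} * maximalIdeal R ^ k := by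
  refine (pow_le_span hm (k + 1)).trans ?_
  rw [Ideal.span_le]
  rintro - ⟨i, hi, rfl⟩
  simp only [Set.mem_Iic] at hi
  show x ^ i * y ^ (k + 1 - i) ∈ _
  by_cases h : i = k + 1
  · subst h
    simp only [Nat.sub_self, pow_zero, mul_one]
    exact Ideal.mem_sup_left (Ideal.subset_span rfl)
  · have hik : i ≤ k := by omega
    apply Ideal.mem_sup_right
    rw [Ideal.mem_span_singleton_mul]
    refine ⟨x ^ i * y ^ (k - i), mono_mem hm (by omega), ?_⟩
    have h2 : k + 1 - i = (k - i) + 1 := by omega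
    rw [h2, pow_succ]
    ring




variable {R : Type*} [CommRing R] [IsDomain R] [IsNoetherianRing R] [IsLocalRing R]

lemma chain3 (hdim : ringKrullDim R = 2) :
    ∃ p₀ p₁ p₂ : PrimeSpectrum R, p₀ < p₁ ∧ p₁ < p₂ := by
  by_contra h
  push_neg at h
  have hlen : ∀ l : LTSeries (PrimeSpectrum R),
      l.length ≤ 1 := by
    intro l
    by_contra hl
    push_neg at hl
    have h2 : 2 ≤ l.length := hl
    have s01 : l ⟨0, by omega⟩ < l ⟨1, by omega⟩ := by
      have := l.step ⟨0, by omega⟩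
      simpa using this
    have s12 : l ⟨1, by omega⟩ < l ⟨2, by omega⟩ := by
      have := l.step ⟨1, by omega⟩
      simpa using this
    exact h _ _ _ s01 s12
  have hsup : (⨆ (p : LTSeries (PrimeSpectrum R)), (p.length : ℕ∞)) ≤ 1 :=
    iSup_le fun l => by exact_mod_cast hlen l
  have hle : ringKrullDim R ≤ 1 := by
    rw [ringKrullDim, Order.krullDim_eq_iSup_length]
    exact WithBot.coe_le_coe.mpr hsup
  rw [hdim] at hle
  norm_num at hle

lemma not_principal (hdim : ringKrullDim R = 2) (t : R)
    (ht : maximalIdeal R = Ideal.span {t}) : False := by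
  obtain ⟨p₀, p₁, p₂, h01, h12⟩ := chain3 hdim
  obtain ⟨a, hap, hap0⟩ := SetLike.exists_of_lt (show p₀.asIdeal < p₁.asIdeal from h01)
  have ha0 : a ≠ 0 := fun h => hap0 (h ▸ p₀.asIdeal.zero_mem)
  have hKrull : (⨅ i : ℕ, maximalIdeal R ^ i) = ⊥ :=
    Ideal.iInf_pow_eq_bot_of_isLocalRing _ (Ideal.IsMaximal.ne_top (IsLocalRing.maximalIdeal.isMaximal R))
  have hnotall : ∃ i, a ∉ maximalIdeal R ^ i := by
    by_contra hall
    push_neg at hall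
    have : a ∈ (⨅ i : ℕ, maximalIdeal R ^ i) := Submodule.mem_iInf _ |>.mpr hall
    rw [hKrull] at this
    exact ha0 this
  classical
  set j := Nat.find hnotall with hj
  have hj1 : 1 ≤ j := by
    rcases Nat.eq_zero_or_pos j with h0 | h1
    · have := Nat.find_spec hnotall
      rw [← hj, h0] at this
      simp at this
    · exact h1
  have hmem : a ∈ maximalIdeal R ^ (j - 1) := by
    by_contra hc
    have h3 : j ≤ j - 1 := Nat.find_le hc
    omega
  have hnot : a ∉ maximalIdeal R ^ j := Nat.find_spec hnotall
  rw [ht, Ideal.span_singleton_pow, Ideal.mem_span_singleton] at hmem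
  obtain ⟨c, hc⟩ := hmem
  have hcu : IsUnit c := by
    by_contra hcu
    have : c ∈ maximalIdeal R := hcu
    rw [ht, Ideal.mem_span_singleton] at this
    obtain ⟨d, rfl⟩ := this
    apply hnot
    rw [ht, Ideal.span_singleton_pow, Ideal.mem_span_singleton]
    refine ⟨d, ?_⟩
    have h4 : j = (j - 1) + 1 := by omega
    rw [hc]
    conv_rhs => rw [h4]
    rw [pow_succ]
    ring
  -- t ^ (j-1) ∈ p₁
  have htj : t ^ (j - 1) ∈ p₁.asIdeal := by
    have hmem2 : t ^ (j - 1) * c ∈ p₁.asIdeal := by rw [← hc]; exact hap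
    rcases p₁.isPrime.mem_or_mem hmem2 with h | h
    · exact h
    · exact absurd h fun hctr => p₁.isPrime.ne_top (Ideal.eq_top_of_isUnit_mem _ hctr hcu)
  have htj' := htj
  have hj2 : 1 ≤ j - 1 := by
    by_contra hcon
    have hj_eq : j = 1 := by omega
    apply hnot
    rw [hj_eq, pow_one]
    exact (IsLocalRing.le_maximalIdeal (p₁.isPrime.ne_top)) hap
  have htp : t ∈ p₁.asIdeal := p₁.isPrime.mem_of_pow_mem _ htj
  have hMp : maximalIdeal R ≤ p₁.asIdeal := by
    rw [ht, Ideal.span_le]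
    simpa using htp
  have : p₂.asIdeal ≤ p₁.asIdeal :=
    le_trans (IsLocalRing.le_maximalIdeal p₂.isPrime.ne_top) hMp
  exact absurd (lt_of_lt_of_le h12 this) (lt_irrefl _)



section Part2
variable {R : Type*} [CommRing R] [IsDomain R] [IsNoetherianRing R] [IsLocalRing R]
variable {x y : R}

lemma y_ne_zero (hm : maximalIdeal R = Ideal.span {x, y}) (hdim : ringKrullDim R = 2) :
    y ≠ 0 := by
  intro h
  apply not_principal hdim x
  rw [hm, h]
  have h1 : ({x, (0 : R)} : Set R) = insert x {0} := rfl
  rw [h1, Ideal.span_insert]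
  simp [Ideal.span_singleton_eq_bot.mpr rfl]

lemma x_ne_zero (hm : maximalIdeal R = Ideal.span {x, y}) (hdim : ringKrullDim R = 2) :
    x ≠ 0 := by
  intro h
  apply not_principal hdim y
  rw [hm, h]
  have h1 : ({(0 : R), y} : Set R) = insert 0 {y} := rfl
  rw [h1, Ideal.span_insert]
  simp [Ideal.span_singleton_eq_bot.mpr rfl]

lemma star (hm : maximalIdeal R = Ideal.span {x, y}) {a : R}
    (hbd : ∃ i, a ∉ Ideal.span {x ^ i} ⊔ Ideal.span {y}) :
    ∃ j u c, IsUnit u ∧ a = u * x ^ j + c * y := by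
  classical
  have h0 : a ∈ Ideal.span {x ^ 0} ⊔ Ideal.span {y} := by
    apply Ideal.mem_sup_left
    simp [Ideal.span_singleton_one]
  set j' := Nat.find hbd with hj'
  have hj1 : 1 ≤ j' := by
    by_contra hz'
    have hz : j' = 0 := by omega
    have hspec := Nat.find_spec hbd
    rw [← hj', hz] at hspec
    exact hspec h0
  have hTj : a ∈ Ideal.span {x ^ (j' - 1)} ⊔ Ideal.span {y} := by
    have h5 := Nat.find_min hbd (show j' - 1 < j' from by omega)
    exact not_not.mp h5
  have hTnot : a ∉ Ideal.span {x ^ (j' - 1 + 1)} ⊔ Ideal.span {y} := by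
    have h4 : j' - 1 + 1 = j' := by omega
    rw [h4]
    exact Nat.find_spec hbd
  obtain ⟨s, hs, t, ht, hst⟩ := Submodule.mem_sup.mp hTj
  rw [Ideal.mem_span_singleton] at hs ht
  obtain ⟨u, rfl⟩ := hs
  obtain ⟨c, rfl⟩ := ht
  have hu : IsUnit u := by
    by_contra hu
    have huM : u ∈ maximalIdeal R := hu
    rw [hm, Ideal.mem_span_pair] at huM
    obtain ⟨α, β, hαβ⟩ := huM
    apply hTnot
    have ha2 : a = α * x ^ (j' - 1 + 1) + (β * x ^ (j' - 1) + c) * y := by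
      rw [← hst, ← hαβ, pow_succ]; ring
    rw [ha2]
    exact Submodule.add_mem_sup
      (Ideal.mem_span_singleton.mpr ⟨α, by ring⟩)
      (Ideal.mem_span_singleton.mpr ⟨β * x ^ (j' - 1) + c, by ring⟩)
  exact ⟨j' - 1, u, c, hu, by rw [← hst]; ring⟩

lemma xpow_not_mem (hm : maximalIdeal R = Ideal.span {x, y}) (hdim : ringKrullDim R = 2) :
    ∀ k, x ^ k ∉ Ideal.span {y} := by
  intro k hk
  -- boundedness
  have hbd_all : ∀ a : R, a ∉ Ideal.span {y} → ∃ i, a ∉ Ideal.span {x ^ i} ⊔ Ideal.span {y} := by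
    intro a ha
    refine ⟨k, fun hmem => ha ?_⟩
    have hle : Ideal.span {x ^ k} ⊔ Ideal.span {y} ≤ Ideal.span {y} :=
      sup_le ((Ideal.span_singleton_le_iff_mem _).mpr hk) le_rfl
    exact hle hmem
  -- classification of ideals containing y
  have classify : ∀ A : Ideal R, Ideal.span {y} ≤ A →
      A = Ideal.span {x ^ sInf {i | x ^ i ∈ A}} ⊔ Ideal.span {y} := by
    intro A hA
    have hSne : k ∈ {i | x ^ i ∈ A} := hA hk
    have hkA : x ^ sInf {i | x ^ i ∈ A} ∈ A := Nat.sInf_mem ⟨k, hSne⟩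
    apply le_antisymm
    · intro a haA
      by_cases hay : a ∈ Ideal.span {y}
      · exact Ideal.mem_sup_right hay
      · obtain ⟨j, u, c, hu, hac⟩ := star hm (hbd_all a hay)
        have hxjA : x ^ j ∈ A := by
          have h1 : u * x ^ j ∈ A := by
            have : u * x ^ j = a - c * y := by rw [hac]; ring
            rw [this]
            exact Submodule.sub_mem _ haA (hA (Ideal.mem_span_singleton.mpr ⟨c, by ring⟩))
          have h2 := A.mul_mem_left ((hu.unit⁻¹ : Rˣ) : R) h1
          rwa [show ((hu.unit⁻¹ : Rˣ) : R) * (u * x ^ j) = x ^ j by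
            rw [← mul_assoc, show ((hu.unit⁻¹ : Rˣ) : R) * u = 1 by
              simpa using hu.unit.inv_mul, one_mul]] at h2
        have hjS : sInf {i | x ^ i ∈ A} ≤ j := Nat.sInf_le hxjA
        rw [hac]
        exact Submodule.add_mem_sup
          (Ideal.mem_span_singleton.mpr (Dvd.dvd.mul_left (pow_dvd_pow x hjS) u))
          (Ideal.mem_span_singleton.mpr ⟨c, by ring⟩)
    · exact sup_le ((Ideal.span_singleton_le_iff_mem _).mpr hkA) hA
  -- get the chain
  obtain ⟨p₀, p₁, p₂, h01, h12⟩ := chain3 hdim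
  haveI hP : p₁.asIdeal.IsPrime := p₁.isPrime
  have hyP : y ∉ p₁.asIdeal := by
    intro hy
    have hxP : x ∈ p₁.asIdeal :=
      hP.mem_of_pow_mem k (((Ideal.span_singleton_le_iff_mem _).mpr hy) hk)
    have hMP : maximalIdeal R ≤ p₁.asIdeal := by
      rw [hm, Ideal.span_le]
      rintro z (rfl | rfl)
      · exact hxP
      · exact hy
    have : p₂.asIdeal ≤ p₁.asIdeal :=
      le_trans (IsLocalRing.le_maximalIdeal p₂.isPrime.ne_top) hMP
    exact absurd (lt_of_lt_of_le h12 this) (lt_irrefl _)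
  -- localization at p₁
  set P := p₁.asIdeal with hPdef
  let Rp := Localization.AtPrime P
  let φ := algebraMap R Rp
  haveI : IsNoetherianRing Rp := IsLocalization.isNoetherianRing P.primeCompl Rp inferInstance
  haveI : IsDomain Rp := IsLocalization.isDomain_localization
    (le_nonZeroDivisors_of_noZeroDivisors fun h0 => h0 (P.zero_mem))
  set J : ℕ → Ideal R := fun l => ((Ideal.map φ P) ^ l).comap φ with hJdef
  have hJanti : ∀ l, J (l + 1) ≤ J l :=
    fun l => Ideal.comap_mono (Ideal.pow_le_pow_right (by omega))
  set g : ℕ → ℕ := fun l => sInf {i | x ^ i ∈ J l ⊔ Ideal.span {y}} with hgdef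
  have hgset : ∀ l, k ∈ {i | x ^ i ∈ J l ⊔ Ideal.span {y}} :=
    fun l => Ideal.mem_sup_right hk
  have hgle : ∀ l, g l ≤ k := fun l => Nat.sInf_le (hgset l)
  have hgmem : ∀ l, x ^ g l ∈ J l ⊔ Ideal.span {y} := fun l => Nat.sInf_mem ⟨k, hgset l⟩
  have hstep : ∀ l, g l ≤ g (l + 1) := by
    intro l
    apply Nat.sInf_le
    exact (sup_le_sup_right (hJanti l) _) (hgmem (l + 1))
  have hexists : ∃ l, g l = g (l + 1) := by
    by_contra hc
    push_neg at hc
    have hmono : ∀ i, i ≤ g i := by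
      intro i
      induction i with
      | zero => omega
      | succ i ih =>
          have := lt_of_le_of_ne (hstep i) (hc i)
          omega
    have := hmono (k + 1)
    have := hgle (k + 1)
    omega
  obtain ⟨l, hl⟩ := hexists
  -- J l ⊔ (y) = J (l+1) ⊔ (y)
  have hsupeq : J l ⊔ Ideal.span {y} = J (l + 1) ⊔ Ideal.span {y} := by
    have e1 := classify (J l ⊔ Ideal.span {y}) le_sup_right
    have e2 := classify (J (l + 1) ⊔ Ideal.span {y}) le_sup_right
    rw [e1, e2]
    have : sInf {i | x ^ i ∈ J l ⊔ Ideal.span {y}} =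
        sInf {i | x ^ i ∈ J (l + 1) ⊔ Ideal.span {y}} := hl
    rw [this]
  -- J l ≤ J (l+1) ⊔ M • J l
  have hyunit : IsUnit (φ y) := IsLocalization.map_units Rp (⟨y, hyP⟩ : P.primeCompl)
  have hNle : J l ≤ J (l + 1) ⊔ (maximalIdeal R) • (J l) := by
    intro a ha
    have haA : a ∈ J (l + 1) ⊔ Ideal.span {y} := by
      rw [← hsupeq]; exact Ideal.mem_sup_left ha
    obtain ⟨b, hb, t, ht, hbt⟩ := Submodule.mem_sup.mp haA
    rw [Ideal.mem_span_singleton] at ht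
    obtain ⟨c, rfl⟩ := ht
    have hcyJ : y * c ∈ J l := by
      have : y * c = a - b := by rw [← hbt]; ring
      rw [this]
      exact Submodule.sub_mem _ ha (hJanti l hb)
    have hcJ : c ∈ J l := by
      have h1 : φ (y * c) ∈ (Ideal.map φ P) ^ l := hcyJ
      rw [_root_.map_mul] at h1
      have h2 := Ideal.mul_mem_left _ ((hyunit.unit⁻¹ : Rpˣ) : Rp) h1
      rw [← mul_assoc, show ((hyunit.unit⁻¹ : Rpˣ) : Rp) * φ y = 1 by
        simpa using hyunit.unit.inv_mul, one_mul] at h2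
      exact h2
    have : a = b + y * c := by rw [← hbt]
    rw [this]
    refine Submodule.add_mem_sup hb ?_
    rw [smul_eq_mul]
    exact Ideal.mul_mem_mul (hyM hm) hcJ
  have hJeq : J l = J (l + 1) :=
    le_antisymm
      (Submodule.le_of_le_smul_of_le_jacobson_bot (IsNoetherian.noetherian _)
        (by rw [IsLocalRing.jacobson_eq_maximalIdeal ⊥ bot_ne_top]) hNle)
      (hJanti l)
  -- powers of maximal ideal of Rp stabilize
  have hmapcomap : ∀ l', Ideal.map φ (J l') = (Ideal.map φ P) ^ l' := by
    intro l'
    exact IsLocalization.map_comap P.primeCompl Rp _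
  have hpow : (Ideal.map φ P) ^ l = (Ideal.map φ P) ^ (l + 1) := by
    rw [← hmapcomap l, ← hmapcomap (l + 1), hJeq]
  set Q := Ideal.map φ P with hQdef
  have hstab : ∀ i, Q ^ (l + i) = Q ^ l := by
    intro i
    induction i with
    | zero => rfl
    | succ i ih =>
        have : l + (i + 1) = (l + i) + 1 := by omega
        rw [this, pow_succ, ih, ← pow_succ, hpow]
  have hQbot : Q ^ (l + 1) = ⊥ := by
    have hle : Q ^ (l + 1) ≤ ⨅ i : ℕ, Q ^ i := by
      refine le_iInf fun i => ?_
      rcases Nat.le_total i (l + 1) with h | h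
      · exact Ideal.pow_le_pow_right h
      · have : Q ^ i = Q ^ l := by
          have : i = l + (i - l) := by omega
          rw [this]; exact hstab _
        rw [this, ← hstab 1]
    have hKrull : (⨅ i : ℕ, (maximalIdeal Rp) ^ i) = ⊥ :=
      Ideal.iInf_pow_eq_bot_of_isLocalRing _
        (Ideal.IsMaximal.ne_top (IsLocalRing.maximalIdeal.isMaximal Rp))
    have hQmax : Q = maximalIdeal Rp := Localization.AtPrime.map_eq_maximalIdeal
    rw [hQmax] at hle ⊢
    exact le_bot_iff.mp (hle.trans hKrull.le)
  -- contradiction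
  obtain ⟨a, hap, hap0⟩ := SetLike.exists_of_lt (show p₀.asIdeal < p₁.asIdeal from h01)
  have hφa : φ a ∈ Q := Ideal.mem_map_of_mem φ hap
  have : (φ a) ^ (l + 1) ∈ Q ^ (l + 1) := Ideal.pow_mem_pow hφa _
  rw [hQbot] at this
  have hφa0 : φ a = 0 := by
    have := (Submodule.mem_bot _).mp this
    exact pow_eq_zero_iff (by omega) |>.mp this
  have ha0 : a = 0 := by
    obtain ⟨⟨s, hs⟩, hsa⟩ := (IsLocalization.map_eq_zero_iff P.primeCompl Rp a).mp hφa0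
    have hs0 : s ≠ 0 := fun h => hs (h ▸ P.zero_mem)
    exact (mul_eq_zero.mp hsa).resolve_left hs0
  exact hap0 (ha0 ▸ p₀.asIdeal.zero_mem)

end Part2

section Part3
variable {R : Type*} [CommRing R] [IsDomain R] [IsNoetherianRing R] [IsLocalRing R]
variable {x y : R}

lemma bd_of_not_mem (hm : maximalIdeal R = Ideal.span {x, y}) {r : R}
    (hr : r ∉ Ideal.span {y}) : ∃ i, r ∉ Ideal.span {x ^ i} ⊔ Ideal.span {y} := by
  by_contra hall
  push_neg at hall
  set N : Ideal R := Ideal.span {y} with hN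
  have hKi : (⨅ i : ℕ, (maximalIdeal R) ^ i • ⊤ : Submodule R (R ⧸ N)) = ⊥ :=
    Ideal.iInf_pow_smul_eq_bot_of_isLocalRing _
      (Ideal.IsMaximal.ne_top (IsLocalRing.maximalIdeal.isMaximal R))
  have hmem : Submodule.Quotient.mk (p := N) r ∈
      (⨅ i : ℕ, (maximalIdeal R) ^ i • ⊤ : Submodule R (R ⧸ N)) := by
    rw [Submodule.mem_iInf]
    intro i
    obtain ⟨s, hs, t, ht, hst⟩ := Submodule.mem_sup.mp (hall i)
    have hsM : s ∈ (maximalIdeal R) ^ i := by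
      rw [Ideal.mem_span_singleton] at hs
      obtain ⟨c, rfl⟩ := hs
      exact Ideal.mul_mem_right c _ (by simpa using mono_mem hm (by omega : i + 0 = i))
    have hmk : Submodule.Quotient.mk (p := N) r = s • Submodule.Quotient.mk (p := N) 1 := by
      have h1 : Submodule.Quotient.mk (p := N) r = Submodule.Quotient.mk (p := N) s := by
        rw [Submodule.Quotient.eq]
        have : r - s = t := by rw [← hst]; ring
        rw [this]
        exact ht
      rw [h1, ← Submodule.Quotient.mk_smul, smul_eq_mul, mul_one]
    rw [hmk]
    exact Submodule.smul_mem_smul hsM Submodule.mem_top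
  rw [hKi] at hmem
  exact hr ((Submodule.Quotient.mk_eq_zero N).mp ((Submodule.mem_bot _).mp hmem))

lemma y_prime (hm : maximalIdeal R = Ideal.span {x, y}) (hdim : ringKrullDim R = 2) :
    Prime y := by
  rw [← Ideal.span_singleton_prime (y_ne_zero hm hdim)]
  constructor
  · intro htop
    apply (IsLocalRing.maximalIdeal.isMaximal R).ne_top
    apply top_le_iff.mp
    rw [← htop]
    exact (Ideal.span_singleton_le_iff_mem _).mpr (hyM hm)
  · intro a b hab
    by_contra hcon
    push_neg at hcon
    obtain ⟨ha, hb⟩ := hcon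
    obtain ⟨j, u, c, hu, haeq⟩ := star hm (bd_of_not_mem hm ha)
    obtain ⟨j', v, d, hv, hbeq⟩ := star hm (bd_of_not_mem hm hb)
    have hxmem : u * v * x ^ (j + j') ∈ Ideal.span {y} := by
      have h1 : u * v * x ^ (j + j') =
          a * b - (u * x ^ j * d + c * v * x ^ j' + c * d * y) * y := by
        rw [haeq, hbeq, pow_add]; ring
      rw [h1]
      exact Submodule.sub_mem _ hab (Ideal.mem_span_singleton.mpr ⟨u * x ^ j * d + c * v * x ^ j' + c * d * y, by ring⟩)
    apply xpow_not_mem hm hdim (j + j')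
    have h2 := Ideal.mem_span_singleton.mp hxmem
    rw [Ideal.mem_span_singleton]
    exact (IsUnit.dvd_mul_left (hu.mul hv)).mp (by rwa [mul_assoc] at h2 ⊢)

lemma mono_indep (hm : maximalIdeal R = Ideal.span {x, y}) (hdim : ringKrullDim R = 2) :
    ∀ (d : ℕ) (c : ℕ → R),
      (∑ i ∈ Finset.range (d + 1), c i * (x ^ i * y ^ (d - i))) ∈ maximalIdeal R ^ (d + 1) →
      ∀ i ≤ d, c i ∈ maximalIdeal R := by
  have hy0 := y_ne_zero hm hdim
  have hyp := y_prime hm hdim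
  intro d
  induction d with
  | zero =>
      intro c hc i hi
      interval_cases i
      simpa using hc
  | succ d ih =>
      intro c hc i hi
      -- decompose membership
      have hc2 := (pow_succ_le hm (d + 1)) hc
      obtain ⟨s, hs, w, hw, hsw⟩ := Submodule.mem_sup.mp hc2
      rw [Ideal.mem_span_singleton] at hs
      obtain ⟨a, rfl⟩ := hs
      rw [Ideal.mem_span_singleton_mul] at hw
      obtain ⟨z, hz, rfl⟩ := hw
      -- split the sum
      have hsum : (∑ i ∈ Finset.range (d + 1 + 1), c i * (x ^ i * y ^ (d + 1 - i))) =
          c (d + 1) * x ^ (d + 1) +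
            y * (∑ i ∈ Finset.range (d + 1), c i * (x ^ i * y ^ (d - i))) := by
        rw [Finset.sum_range_succ]
        rw [Finset.mul_sum]
        have hterm : ∀ i ∈ Finset.range (d + 1),
            c i * (x ^ i * y ^ (d + 1 - i)) = y * (c i * (x ^ i * y ^ (d - i))) := by
          intro i hi'
          simp only [Finset.mem_range] at hi'
          have h6 : d + 1 - i = (d - i) + 1 := by omega
          rw [h6, pow_succ]
          ring
        rw [Finset.sum_congr rfl hterm]
        simp
        ring
      set T := ∑ i ∈ Finset.range (d + 1), c i * (x ^ i * y ^ (d - i)) with hT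
      have hkey : x ^ (d + 1) * (c (d + 1) - a * x) = y * (z - T) := by
        have h7 : c (d + 1) * x ^ (d + 1) + y * T = x ^ (d + 1 + 1) * a + y * z := by
          rw [← hsum]; exact hsw.symm
        linear_combination h7
      have hdvd : y ∣ c (d + 1) - a * x := by
        have h8 : y ∣ x ^ (d + 1) * (c (d + 1) - a * x) := ⟨z - T, hkey⟩
        rcases (Prime.dvd_mul hyp).mp h8 with h9 | h9
        · exfalso
          exact xpow_not_mem hm hdim (d + 1) (Ideal.mem_span_singleton.mpr h9)
        · exact h9
      obtain ⟨b, hbeq⟩ := hdvd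
      have hcd1 : c (d + 1) ∈ maximalIdeal R := by
        have : c (d + 1) = a * x + y * b := by rw [← hbeq]; ring
        rw [this, hm]
        exact Ideal.add_mem _ (Ideal.mem_span_pair.mpr ⟨a, 0, by ring⟩)
          (Ideal.mem_span_pair.mpr ⟨0, b, by ring⟩)
      by_cases hieq : i = d + 1
      · rw [hieq]; exact hcd1
      · have hid : i ≤ d := by omega
        -- cancel y
        have hTmem : T ∈ maximalIdeal R ^ (d + 1) := by
          have h10 : y * (x ^ (d + 1) * b) = y * (z - T) := by
            rw [← hkey, hbeq]; ring
          have h11 : x ^ (d + 1) * b = z - T := mul_left_cancel₀ hy0 h10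
          have h12 : T = z - x ^ (d + 1) * b := by linear_combination h11
          rw [h12]
          refine Submodule.sub_mem _ hz (Ideal.mul_mem_right b _ ?_)
          simpa using mono_mem hm (by omega : (d + 1) + 0 = d + 1)
        exact ih c hTmem i hid

end Part3

section Part4
variable {R : Type*} [CommRing R] [IsDomain R] [IsNoetherianRing R] [IsLocalRing R]
variable {x y : R}

lemma ypow_factor (hy0 : y ≠ 0) (hyp : Prime y)
    (hx : ∀ k, x ^ k ∉ Ideal.span {y}) :
    ∀ (k : ℕ) (g v : R) (m' : ℕ), g * x ^ m' = y ^ k * v →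
      ∃ g', g = y ^ k * g' ∧ g' * x ^ m' = v := by
  intro k
  induction k with
  | zero => intro g v m' h; exact ⟨g, by simp, by simpa using h⟩
  | succ k ih =>
      intro g v m' h
      have hdvd : y ∣ g * x ^ m' := ⟨y ^ k * v, by rw [h, pow_succ]; ring⟩
      have hyg : y ∣ g := by
        rcases (Prime.dvd_mul hyp).mp hdvd with h1 | h1
        · exact h1
        · exact absurd (Ideal.mem_span_singleton.mpr h1) (hx m')
      obtain ⟨g₁, rfl⟩ := hyg
      have h2 : y * (g₁ * x ^ m') = y * (y ^ k * v) := by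
        linear_combination h
      have h3 : g₁ * x ^ m' = y ^ k * v := mul_left_cancel₀ hy0 h2
      obtain ⟨g', hg1, hg2⟩ := ih g₁ v m' h3
      exact ⟨g', by rw [hg1, pow_succ]; ring, hg2⟩

lemma rel_lemma (hm : maximalIdeal R = Ideal.span {x, y}) (hdim : ringKrullDim R = 2)
    (q e : ℕ) (r : ℕ → R) (s : R)
    (hs : s * x ^ (q + 1) + ∑ j ∈ Finset.range (q + 1), r j * (x ^ j * y ^ (q + 1 + e - j)) ∈
      maximalIdeal R *
        (Ideal.span {x ^ (q + 1)} + Ideal.span {y ^ (e + 1)} * maximalIdeal R ^ q)) :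
    s ∈ maximalIdeal R ∧ ∀ j ≤ q, r j ∈ maximalIdeal R := by
  have hy0 := y_ne_zero hm hdim
  have hyp := y_prime hm hdim
  have hx := fun k => xpow_not_mem hm hdim k
  -- rewrite the ideal
  have hideal : maximalIdeal R *
      (Ideal.span {x ^ (q + 1)} + Ideal.span {y ^ (e + 1)} * maximalIdeal R ^ q) =
      Ideal.span {x ^ (q + 1)} * maximalIdeal R +
        Ideal.span {y ^ (e + 1)} * maximalIdeal R ^ (q + 1) := by
    rw [mul_add]
    congr 1
    · ring
    · rw [pow_succ]; ring
  rw [hideal] at hs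
  obtain ⟨wa, hwa, wb, hwb, hww⟩ := Submodule.mem_sup.mp hs
  rw [Ideal.mem_span_singleton_mul] at hwa hwb
  obtain ⟨z, hz, rfl⟩ := hwa
  obtain ⟨w₀, hw₀, rfl⟩ := hwb
  -- the sum is divisible by y^(e+1)
  have hsum : (∑ j ∈ Finset.range (q + 1), r j * (x ^ j * y ^ (q + 1 + e - j))) =
      y ^ (e + 1) * (∑ j ∈ Finset.range (q + 1), r j * (x ^ j * y ^ (q - j))) := by
    rw [Finset.mul_sum]
    refine Finset.sum_congr rfl fun j hj => ?_
    simp only [Finset.mem_range] at hj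
    have h6 : q + 1 + e - j = (e + 1) + (q - j) := by omega
    rw [h6, pow_add]
    ring
  set U := ∑ j ∈ Finset.range (q + 1), r j * (x ^ j * y ^ (q - j)) with hU
  have hkey : (s - z) * x ^ (q + 1) = y ^ (e + 1) * (w₀ - U) := by
    have h7 : s * x ^ (q + 1) + y ^ (e + 1) * U = x ^ (q + 1) * z + y ^ (e + 1) * w₀ := by
      rw [← hsum]; exact hww.symm
    linear_combination h7
  obtain ⟨g', hg1, hg2⟩ := ypow_factor hy0 hyp hx (e + 1) (s - z) (w₀ - U) (q + 1) hkey
  constructor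
  · have hseq : s = z + y ^ (e + 1) * g' := by linear_combination hg1
    rw [hseq]
    refine Ideal.add_mem _ hz (Ideal.mul_mem_right _ _ ?_)
    exact Ideal.pow_mem_of_mem _ (hyM hm) _ (by omega)
  · have hUmem : U ∈ maximalIdeal R ^ (q + 1) := by
      have h8 : U = w₀ - g' * x ^ (q + 1) := by linear_combination hg2
      rw [h8]
      refine Submodule.sub_mem _ hw₀ (Ideal.mul_mem_left _ g' ?_)
      simpa using mono_mem hm (by omega : (q + 1) + 0 = q + 1)
    exact mono_indep hm hdim q r hUmem

end Part4
end Helpers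


/-- Minimal number of generators of an ideal. -/
noncomputable def mu {R : Type*} [CommRing R] (I : Ideal R) : ℕ :=
  sInf {n : ℕ | ∃ s : Finset R, s.card = n ∧ Ideal.span (s : Set R) = I}

/-- The order of an ideal: the largest `n` with `I ⊆ 𝔪ⁿ`. -/
noncomputable def ord {R : Type*} [CommRing R] [IsLocalRing R] (I : Ideal R) : ℕ :=
  sSup {n : ℕ | I ≤ IsLocalRing.maximalIdeal R ^ n}

/-- For `2 ≤ m ≤ n` and `I = (xᵐ) + y^(n-m+1) 𝔪^(m-1)`, `Q = (xᵐ, yⁿ)`: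
`Q ⊆ I`, `I² = QI`, `μ(I) = m + 1` and `o(I) = m`; in particular `I` is a
contracted stable ideal. -/
theorem contracted_stable_example {R : Type*} [CommRing R] [IsDomain R] [IsNoetherianRing R]
    [IsLocalRing R] (x y : R) (hm : maximalIdeal R = Ideal.span {x, y})
    (hdim : ringKrullDim R = 2) (hres : Infinite (ResidueField R))
    (m n : ℕ) (h2m : 2 ≤ m) (hmn : m ≤ n)
    (I Q : Ideal R)
    (hI : I = Ideal.span {x ^ m} + Ideal.span {y ^ (n - m + 1)} * maximalIdeal R ^ (m - 1))
    (hQ : Q = Ideal.span {x ^ m, y ^ n}) :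
    Q ≤ I ∧ I ^ 2 = Q * I ∧ mu I = m + 1 ∧ ord I = m := by
  obtain ⟨q, rfl⟩ : ∃ q, m = q + 1 := ⟨m - 1, by omega⟩
  obtain ⟨e, rfl⟩ : ∃ e, n = (q + 1) + e := ⟨n - (q + 1), by omega⟩
  set M := maximalIdeal R with hMdef
  have hI' : I = Ideal.span {x ^ (q + 1)} + Ideal.span {y ^ (e + 1)} * M ^ q := by
    have h1 : q + 1 + e - (q + 1) + 1 = e + 1 := by omega
    have h2 : q + 1 - 1 = q := by omega
    rw [hI, h1, h2]
  clear hI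
  set A := Ideal.span {x ^ (q + 1)} with hA
  set B := Ideal.span {y ^ (e + 1)} * M ^ q with hB
  -- y^n ∈ B
  have hynB : y ^ (q + 1 + e) ∈ B := by
    rw [hB, Ideal.mem_span_singleton_mul]
    exact ⟨y ^ q, by simpa using mono_mem hm (by omega : 0 + q = q),
      by rw [← pow_add]; congr 1; omega⟩
  -- Q ≤ I
  have hQle : Q ≤ I := by
    rw [hQ, hI', Submodule.add_eq_sup, Ideal.span_insert]
    apply sup_le
    · exact le_sup_left
    · exact le_trans ((Ideal.span_singleton_le_iff_mem _).mpr hynB) le_sup_right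
  refine ⟨hQle, ?_, ?_, ?_⟩
  -- I² = QI
  · have hAQ : A ≤ Q := by
      rw [hQ, Ideal.span_insert]
      exact le_sup_left
    have hyQ : Ideal.span {y ^ (q + 1 + e)} ≤ Q := by
      rw [hQ, Ideal.span_insert]
      exact le_sup_right
    have hAI : A ≤ I := by rw [hI', Submodule.add_eq_sup]; exact le_sup_left
    have hBI : B ≤ I := by rw [hI', Submodule.add_eq_sup]; exact le_sup_right
    apply le_antisymm
    · -- I^2 ≤ Q * I
      have hBIeq : B * I = B * A + B * B := by
        nth_rewrite 1 [hI']
        rw [mul_add]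
      have hII : I ^ 2 = A * I + (B * A + B * B) := by
        rw [pow_two]
        nth_rewrite 1 [hI']
        rw [add_mul, hBIeq]
      rw [hII, Submodule.add_eq_sup, Submodule.add_eq_sup]
      have h1 : A * I ≤ Q * I := Ideal.mul_mono_left hAQ
      have h2 : B * A ≤ Q * I := by
        rw [mul_comm]
        exact Ideal.mul_mono hAQ hBI
      have h3 : B * B ≤ Q * I := by
        have hMM : M ^ q * M ^ q = M ^ (q + q) := (pow_add M q q).symm
        have hBB : B * B = Ideal.span {y ^ (e + 1) * y ^ (e + 1)} * M ^ (q + q) := by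
          rw [hB, mul_mul_mul_comm, Ideal.span_singleton_mul_span_singleton, hMM]
        rw [hBB]
        calc Ideal.span {y ^ (e + 1) * y ^ (e + 1)} * M ^ (q + q)
            ≤ Ideal.span {y ^ (e + 1) * y ^ (e + 1)} *
                Ideal.span ((fun i => x ^ i * y ^ (q + q - i)) '' Set.Iic (q + q)) :=
              Ideal.mul_mono_right (pow_le_span hm (q + q))
          _ ≤ Q * I := by
              rw [Ideal.span_mul_span]
              rw [Ideal.span_le]
              intro z hz
              simp only [Set.mem_mul, Set.mem_iUnion, Set.mem_singleton_iff, Set.mem_image,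
                Set.mem_Iic, exists_prop] at hz
              obtain ⟨s, hs, t, ⟨⟨i, hi, rfl⟩, rfl⟩⟩ := hz
              subst hs
              by_cases hiq : i ≤ q
              · -- use y^n ∈ Q
                obtain ⟨j, hj⟩ : ∃ j, q = i + j := ⟨q - i, by omega⟩
                have hqq : q + q - i = q + j := by omega
                rw [hqq]
                have heq : y ^ (e + 1) * y ^ (e + 1) * (x ^ i * y ^ (q + j)) =
                    y ^ (q + 1 + e) * (y ^ (e + 1) * (x ^ i * y ^ j)) := by
                  rw [hj]
                  ring
                rw [heq]
                refine Ideal.mul_mem_mul (hyQ (Ideal.subset_span rfl)) (hBI ?_)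
                rw [hB, Ideal.mem_span_singleton_mul]
                exact ⟨x ^ i * y ^ j, mono_mem hm (by omega), rfl⟩
              · -- i > q, use x^(q+1) ∈ Q
                obtain ⟨k, j2, hk, hj2⟩ : ∃ k j2, i = q + 1 + k ∧ q = k + 1 + j2 :=
                  ⟨i - (q + 1), q - (i - q), by omega, by omega⟩
                have hqq : q + q - i = j2 := by omega
                rw [hqq, hk]
                have heq : y ^ (e + 1) * y ^ (e + 1) * (x ^ (q + 1 + k) * y ^ j2) =
                    x ^ (q + 1) * (y ^ (e + 1) * (x ^ k * y ^ (e + 1 + j2))) := by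
                  ring
                rw [heq]
                refine Ideal.mul_mem_mul (hAQ (Ideal.subset_span rfl)) (hBI ?_)
                rw [hB, Ideal.mem_span_singleton_mul]
                refine ⟨x ^ k * y ^ (e + 1 + j2), ?_, rfl⟩
                have : x ^ k * y ^ (e + 1 + j2) ∈ M ^ (q + e) :=
                  mono_mem hm (by omega)
                exact Ideal.pow_le_pow_right (by omega) this
      exact sup_le h1 (sup_le h2 h3)
    · -- Q * I ≤ I^2
      rw [pow_two]
      exact Ideal.mul_mono_left hQle
  · -- mu I = q + 2
    classical
    set 𝕜 := ResidueField R with h𝕜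
    set gv : Fin (q + 2) → R :=
      fun i => if (i : ℕ) ≤ q then x ^ (i : ℕ) * y ^ (q + 1 + e - (i : ℕ)) else x ^ (q + 1)
      with hgv
    have hgvI : ∀ i, gv i ∈ I := by
      intro i
      rw [hgv]
      dsimp only
      by_cases hiq : (i : ℕ) ≤ q
      · rw [if_pos hiq, hI', Submodule.add_eq_sup]
        apply Submodule.mem_sup_right
        obtain ⟨j, hj⟩ : ∃ j, q = (i : ℕ) + j := ⟨q - (i : ℕ), by omega⟩
        rw [hB, Ideal.mem_span_singleton_mul]
        refine ⟨x ^ (i : ℕ) * y ^ j, mono_mem hm (by omega), ?_⟩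
        rw [show q + 1 + e - (i : ℕ) = e + 1 + j by omega]
        ring
      · rw [if_neg hiq, hI', Submodule.add_eq_sup]
        exact Submodule.mem_sup_left (Ideal.subset_span rfl)
    have hspanI : Ideal.span (Set.range gv) = I := by
      apply le_antisymm
      · rw [Ideal.span_le]
        rintro - ⟨i, rfl⟩
        exact hgvI i
      · rw [hI', Submodule.add_eq_sup]
        apply sup_le
        · refine (Ideal.span_singleton_le_iff_mem _).mpr (Ideal.subset_span ?_)
          refine ⟨⟨q + 1, by omega⟩, ?_⟩
          rw [hgv]
          simp
        · rw [hB]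
          calc Ideal.span {y ^ (e + 1)} * M ^ q
              ≤ Ideal.span {y ^ (e + 1)} *
                  Ideal.span ((fun i => x ^ i * y ^ (q - i)) '' Set.Iic q) :=
                Ideal.mul_mono_right (pow_le_span hm q)
            _ ≤ Ideal.span (Set.range gv) := by
                rw [Ideal.span_mul_span, Ideal.span_le]
                intro z hz
                simp only [Set.mem_mul, Set.mem_iUnion, Set.mem_singleton_iff, Set.mem_image,
                  Set.mem_Iic, exists_prop] at hz
                obtain ⟨s, hs, t, ⟨⟨i, hi, rfl⟩, rfl⟩⟩ := hz
                subst hs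
                apply Ideal.subset_span
                refine ⟨⟨i, by omega⟩, ?_⟩
                rw [hgv]
                obtain ⟨j, hj⟩ : ∃ j, q = i + j := ⟨q - i, by omega⟩
                simp only []
                rw [if_pos (show ((⟨i, by omega⟩ : Fin (q + 2)) : ℕ) ≤ q from hi)]
                show x ^ i * y ^ (q + 1 + e - i) = y ^ (e + 1) * (x ^ i * y ^ (q - i))
                rw [show q + 1 + e - i = e + 1 + (q - i) by omega]
                ring
    -- relation lemma in Fin form
    have hrelF : ∀ r : Fin (q + 2) → R, (∑ i, r i * gv i) ∈ M * I → ∀ i, r i ∈ M := by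
      intro r hr i
      set rN : ℕ → R := fun j => if h : j < q + 2 then r ⟨j, h⟩ else 0 with hrN
      set gvN : ℕ → R :=
        fun j => if j ≤ q then x ^ j * y ^ (q + 1 + e - j) else x ^ (q + 1) with hgvN
      have hsum : (∑ i, r i * gv i) = rN (q + 1) * x ^ (q + 1) +
          ∑ j ∈ Finset.range (q + 1), rN j * (x ^ j * y ^ (q + 1 + e - j)) := by
        calc (∑ i, r i * gv i) = ∑ i : Fin (q + 2), rN (i : ℕ) * gvN (i : ℕ) := by
              refine Finset.sum_congr rfl fun i _ => ?_
              rw [hrN, hgvN, hgv]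
              simp only [dif_pos i.isLt]
          _ = ∑ j ∈ Finset.range (q + 2), rN j * gvN j :=
              Fin.sum_univ_eq_sum_range (fun j => rN j * gvN j) (q + 2)
          _ = (∑ j ∈ Finset.range (q + 1), rN j * gvN j) + rN (q + 1) * gvN (q + 1) :=
              Finset.sum_range_succ _ _
          _ = rN (q + 1) * x ^ (q + 1) +
              ∑ j ∈ Finset.range (q + 1), rN j * (x ^ j * y ^ (q + 1 + e - j)) := by
              rw [add_comm]
              congr 1
              · rw [hgvN]; simp only [] ; rw [if_neg (by omega)]
              · refine Finset.sum_congr rfl fun j hj => ?_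
                simp only [Finset.mem_range] at hj
                rw [hgvN]
                simp only []
                rw [if_pos (by omega)]
      have hmem : rN (q + 1) * x ^ (q + 1) +
          ∑ j ∈ Finset.range (q + 1), rN j * (x ^ j * y ^ (q + 1 + e - j)) ∈
          maximalIdeal R *
            (Ideal.span {x ^ (q + 1)} + Ideal.span {y ^ (e + 1)} * maximalIdeal R ^ q) := by
        rw [← hsum]
        rw [hI'] at hr
        exact hr
      obtain ⟨hs', hr'⟩ := rel_lemma hm hdim q e rN (rN (q + 1)) hmem
      by_cases hiq : (i : ℕ) ≤ q
      · have h1 := hr' (i : ℕ) hiq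
        rw [hrN] at h1
        simp only [dif_pos i.isLt, Fin.eta] at h1
        exact h1
      · have hieq : i = ⟨q + 1, by omega⟩ := by
          have := i.isLt
          apply Fin.ext
          simp only []
          omega
        rw [hrN] at hs'
        simp only [dif_pos (show q + 1 < q + 2 by omega)] at hs'
        rw [hieq]
        exact hs'
    -- injectivity of gv
    have hginj : Function.Injective gv := by
      intro i j hij
      by_contra hne
      set r : Fin (q + 2) → R :=
        fun k => (if k = i then (1 : R) else 0) - (if k = j then 1 else 0) with hr
      have hsum0 : (∑ k, r k * gv k) = 0 := by
        have hterm : ∀ k, r k * gv k =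
            (if k = i then gv k else 0) - (if k = j then gv k else 0) := by
          intro k
          rw [hr]
          simp only []
          split_ifs <;> ring
        rw [Finset.sum_congr rfl (fun k _ => hterm k), Finset.sum_sub_distrib,
          Finset.sum_ite_eq' Finset.univ i gv, Finset.sum_ite_eq' Finset.univ j gv]
        simp [hij]
      have h1 := hrelF r (by rw [hsum0]; exact Ideal.zero_mem _) i
      rw [hr] at h1
      simp only [if_pos rfl, if_neg hne, sub_zero] at h1
      exact (Ideal.IsMaximal.ne_top (IsLocalRing.maximalIdeal.isMaximal R))
        (Ideal.eq_top_of_isUnit_mem _ h1 isUnit_one)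
    have hupper : ∃ s : Finset R, s.card = q + 2 ∧ Ideal.span (s : Set R) = I := by
      refine ⟨Finset.image gv Finset.univ, ?_, ?_⟩
      · rw [Finset.card_image_of_injective _ hginj, Finset.card_univ, Fintype.card_fin]
      · rw [Finset.coe_image, Finset.coe_univ, Set.image_univ, hspanI]
    have hlower : ∀ c ∈ {n' : ℕ | ∃ s : Finset R, s.card = n' ∧
        Ideal.span (s : Set R) = I}, q + 2 ≤ c := by
      rintro c ⟨t, hcard, hspan⟩
      have hgen : ∀ i : Fin (q + 2), ∃ f : R → R, ∑ w ∈ t, f w • w = gv i := by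
        intro i
        have hmemt : gv i ∈ Submodule.span R (t : Set R) := by
          rw [show Submodule.span R (t : Set R) = Ideal.span (t : Set R) from rfl, hspan]
          exact hgvI i
        obtain ⟨f, -, hf⟩ := mem_span_finset.mp hmemt
        exact ⟨f, hf⟩
      choose a ha using hgen
      have hwmem : ∀ w ∈ t, ∃ b : Fin (q + 2) → R, ∑ j, b j • gv j = w := by
        intro w hwt
        apply (mem_span_range_iff_exists_fun R).mp
        rw [show Submodule.span R (Set.range gv) = Ideal.span (Set.range gv) from rfl, hspanI,
          ← hspan]
        exact Ideal.subset_span hwt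
      choose b hb using hwmem
      -- the relation coefficients
      have hC : ∀ i j : Fin (q + 2),
          ((if j = i then (1 : R) else 0) - ∑ w ∈ t.attach, a i ↑w * b ↑w w.2 j) ∈ M := by
        intro i j
        set rr : Fin (q + 2) → R :=
          fun j => (if j = i then (1 : R) else 0) - ∑ w ∈ t.attach, a i ↑w * b ↑w w.2 j with hrr
        have hkey : (∑ j', rr j' * gv j') = 0 := by
          have hsplit : ∀ j' : Fin (q + 2), rr j' * gv j' =
              (if j' = i then gv j' else 0) -
                ∑ w ∈ t.attach, a i ↑w * (b ↑w w.2 j' * gv j') := by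
            intro j'
            rw [hrr]
            simp only []
            rw [sub_mul, Finset.sum_mul]
            congr 1
            · split_ifs <;> ring
            · refine Finset.sum_congr rfl fun w _ => by ring
          rw [Finset.sum_congr rfl (fun j' _ => hsplit j'), Finset.sum_sub_distrib,
            Finset.sum_ite_eq' Finset.univ i gv]
          simp only [Finset.mem_univ, if_pos]
          rw [Finset.sum_comm]
          have hinner : ∀ w ∈ t.attach,
              (∑ j' : Fin (q + 2), a i ↑w * (b ↑w w.2 j' * gv j')) = a i ↑w * ↑w := by
            intro w _
            rw [← Finset.mul_sum]
            congr 1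
            calc (∑ j' : Fin (q + 2), b ↑w w.2 j' * gv j') =
                ∑ j' : Fin (q + 2), b ↑w w.2 j' • gv j' := by
                  refine Finset.sum_congr rfl fun j' _ => ?_
                  rw [smul_eq_mul]
              _ = ↑w := hb ↑w w.2
          rw [Finset.sum_congr rfl hinner]
          have hfinal : (∑ w ∈ t.attach, a i ↑w * ↑w) = gv i := by
            rw [← ha i]
            rw [← Finset.sum_attach t (fun w => a i w • w)]
            refine Finset.sum_congr rfl fun w _ => ?_
            rw [smul_eq_mul]
          rw [hfinal, sub_self]
        exact hrelF rr (by rw [hkey]; exact Ideal.zero_mem _) j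
      -- matrices over the residue field
      let Amat : Matrix (Fin (q + 2)) {w // w ∈ t} 𝕜 := fun i w => IsLocalRing.residue R (a i ↑w)
      let Bmat : Matrix {w // w ∈ t} (Fin (q + 2)) 𝕜 := fun w j => IsLocalRing.residue R (b ↑w w.2 j)
      have hprod : Amat * Bmat = 1 := by
        ext i j
        rw [Matrix.mul_apply]
        have h1 : (∑ w : {w // w ∈ t}, Amat i w * Bmat w j) =
            IsLocalRing.residue R (∑ w ∈ t.attach, a i ↑w * b ↑w w.2 j) := by
          rw [map_sum]
          rw [Finset.univ_eq_attach]
          rfl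
        have h2 : IsLocalRing.residue R ((if j = i then (1 : R) else 0)
            - ∑ w ∈ t.attach, a i ↑w * b ↑w w.2 j) = 0 :=
          (IsLocalRing.residue_eq_zero_iff _).mpr (hC i j)
        rw [map_sub] at h2
        have h3 : IsLocalRing.residue R (∑ w ∈ t.attach, a i ↑w * b ↑w w.2 j) =
            IsLocalRing.residue R (if j = i then (1 : R) else 0) := by
          linear_combination -h2
        rw [h1, h3, Matrix.one_apply]
        by_cases hij : i = j
        · subst hij; simp
        · rw [if_neg (fun h => hij h.symm), if_neg hij, map_zero]
      have hrank1 : (1 : Matrix (Fin (q + 2)) (Fin (q + 2)) 𝕜).rank = q + 2 := by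
        rw [Matrix.rank_one, Fintype.card_fin]
      have hrank2 : (Amat * Bmat).rank ≤ t.card := by
        refine le_trans (Matrix.rank_mul_le_left Amat Bmat) ?_
        refine le_trans (Matrix.rank_le_card_width Amat) ?_
        rw [Fintype.card_coe]
      rw [hprod, hrank1] at hrank2
      omega
    apply le_antisymm
    · exact Nat.sInf_le hupper
    · exact le_csInf ⟨q + 2, hupper⟩ hlower
  -- ord I = q + 1
  · have hIM : I ≤ M ^ (q + 1) := by
      rw [hI', Submodule.add_eq_sup]
      apply sup_le
      · refine (Ideal.span_singleton_le_iff_mem _).mpr ?_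
        simpa using mono_mem hm (by omega : (q + 1) + 0 = q + 1)
      · calc Ideal.span {y ^ (e + 1)} * M ^ q ≤ M ^ (e + 1) * M ^ q := by
              refine Ideal.mul_mono_left ?_
              refine (Ideal.span_singleton_le_iff_mem _).mpr ?_
              simpa using mono_mem hm (by omega : 0 + (e + 1) = e + 1)
          _ = M ^ (e + 1 + q) := by rw [← pow_add]
          _ ≤ M ^ (q + 1) := Ideal.pow_le_pow_right (by omega)
    have hbound : ∀ k ∈ {k : ℕ | I ≤ M ^ k}, k ≤ q + 1 := by
      intro k hk
      by_contra hgt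
      push_neg at hgt
      have hx1 : x ^ (q + 1) ∈ M ^ (q + 2) := by
        have h1 : x ^ (q + 1) ∈ I := by
          rw [hI', Submodule.add_eq_sup]
          exact Submodule.mem_sup_left (Ideal.subset_span rfl)
        have h2 := hk h1
        exact Ideal.pow_le_pow_right (by omega) h2
      have hsum : (∑ i ∈ Finset.range (q + 1 + 1),
          (if i = q + 1 then (1 : R) else 0) * (x ^ i * y ^ (q + 1 - i))) = x ^ (q + 1) := by
        have hterm : ∀ i ∈ Finset.range (q + 1 + 1),
            (if i = q + 1 then (1 : R) else 0) * (x ^ i * y ^ (q + 1 - i)) =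
              if i = q + 1 then x ^ i * y ^ (q + 1 - i) else 0 := by
          intro i _
          split <;> simp
        rw [Finset.sum_congr rfl hterm, Finset.sum_ite_eq' (Finset.range (q + 1 + 1))]
        simp
      have := mono_indep hm hdim (q + 1) (fun i => if i = q + 1 then 1 else 0)
        (by rw [hsum]; exact hx1) (q + 1) le_rfl
      simp only [if_pos rfl] at this
      exact (Ideal.IsMaximal.ne_top (IsLocalRing.maximalIdeal.isMaximal R))
        (Ideal.eq_top_of_isUnit_mem _ this isUnit_one)
    have hmem : q + 1 ∈ {k : ℕ | I ≤ M ^ k} := hIM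
    rw [ord]
    apply le_antisymm
    · exact csSup_le ⟨q + 1, hmem⟩ hbound
    · exact le_csSup ⟨q + 1, hbound⟩ hmem
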